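/- Fix μ > 0. Let Q be a probability measure on [0,1] with Lebesgue density q such that ∫₀¹ log q(γ) dγ > −∞ and p_A(y;Q) := ∫₀¹ p_A(y|γ) dQ(γ) > 0 whenever p̂(y) > 0. Let Q_s be a probability measure on [0,1] that is singular with respect to Lebesgue measure, and set G = Q_s − Q. Then the one-sided directional (Gâteaux) derivative of ℓ_μ at Q in direction G exists and equals lim_{λ→0⁺} (ℓ_μ[Q + λG] − ℓ_μ[Q])/λ = ∑_{y=0}^N p̂(y)·p_A(y;Q_s)/p_A(y;Q) − 1 − μ, where p_A(y;Q_s) = ∫₀¹ p_A(y|γ) dQ_s(γ). -/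

import Mathlib

open MeasureTheory Set Filter Topology
open scoped Classical

/-- Lebesgue measure restricted to `[0,1]` (this is the uniform probability measure `P_U`). -/
noncomputable def lebI : Measure ℝ := volume.restrict (Set.Icc 0 1)

/-- A probability measure concentrated on `[0,1]`. -/
def IsProbOn (P : Measure ℝ) : Prop := IsProbabilityMeasure P ∧ P (Set.Icc (0:ℝ) 1)ᶜ = 0

/-- A probability density on `[0,1]`. -/
def IsDensity (f : ℝ → ℝ) : Prop :=
  Measurable f ∧ (∀ γ, 0 ≤ f γ) ∧ ∫ γ, f γ ∂lebI = 1

/-- The measure on `[0,1]` with Lebesgue density `f`. -/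
noncomputable def densM (f : ℝ → ℝ) : Measure ℝ :=
  lebI.withDensity fun γ => ENNReal.ofReal (f γ)

/-- Kullback–Leibler divergence `D(ν‖ρ)`, valued in `EReal`: it equals
`∫ log (dν/dρ) dν` when `ν ≪ ρ` and the log-likelihood ratio is `ν`-integrable,
and `+∞` otherwise. -/
noncomputable def KLdiv (ν ρ : Measure ℝ) : EReal :=
  if ν ≪ ρ ∧ Integrable (fun x => Real.log ((ν.rnDeriv ρ x).toReal)) ν
  then ((∫ x, Real.log ((ν.rnDeriv ρ x).toReal) ∂ν : ℝ) : EReal)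
  else ⊤

/-- Implied marginal `p_MA(y) = ∫ p_A(y|γ) dP_M(γ)`. -/
noncomputable def margin (pA : ℕ → ℝ → ℝ) (P : Measure ℝ) (y : ℕ) : ℝ := ∫ γ, pA y γ ∂P

/-- Mixture log-likelihood `ℓ[P_M] = ∑_y p̂(y) log p_MA(y)`, valued in `EReal`
(it is `−∞` when some `y` with `p̂(y) > 0` has zero implied marginal mass). -/
noncomputable def loglik (N : ℕ) (pA : ℕ → ℝ → ℝ) (phat : ℕ → ℝ) (P : Measure ℝ) : EReal :=
  if ∀ y ∈ Finset.range (N + 1), 0 < phat y → 0 < margin pA P y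
  then ((∑ y ∈ Finset.range (N + 1), phat y * Real.log (margin pA P y) : ℝ) : EReal)
  else ⊥

/-- Regularized log-likelihood `ℓ_μ[P_M] = ℓ[P_M] − μ·D(P_U‖P_M)`. -/
noncomputable def regLoglik (N : ℕ) (pA : ℕ → ℝ → ℝ) (phat : ℕ → ℝ) (μ : ℝ)
    (P : Measure ℝ) : EReal :=
  loglik N pA phat P - (μ : EReal) * KLdiv lebI P

-- ### auxiliary lemmas
open scoped ENNReal NNReal

instance lebI_prob : IsProbabilityMeasure lebI := by
  constructor
  rw [lebI, Measure.restrict_apply_univ]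
  simp [Real.volume_Icc]

lemma isDensity_integrable {q : ℝ → ℝ} (hq : IsDensity q) : Integrable q lebI := by
  by_contra h
  have h2 := hq.2.2
  rw [integral_undef h] at h2
  exact one_ne_zero h2.symm

lemma isDensity_lintegral {q : ℝ → ℝ} (hq : IsDensity q) :
    ∫⁻ γ, ENNReal.ofReal (q γ) ∂lebI = 1 := by
  rw [← ofReal_integral_eq_lintegral_ofReal (isDensity_integrable hq)
    (Filter.Eventually.of_forall hq.2.1), hq.2.2, ENNReal.ofReal_one]

instance densM_prob' {q : ℝ → ℝ} : SigmaFinite (densM q) := by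
  rw [densM]; infer_instance

lemma densM_prob {q : ℝ → ℝ} (hq : IsDensity q) : IsProbabilityMeasure (densM q) := by
  constructor
  rw [densM, withDensity_apply _ MeasurableSet.univ, Measure.restrict_univ,
    isDensity_lintegral hq]

lemma densM_compl {q : ℝ → ℝ} : densM q (Set.Icc (0:ℝ) 1)ᶜ = 0 := by
  rw [densM, withDensity_apply _ (measurableSet_Icc.compl)]
  have : lebI (Set.Icc (0:ℝ) 1)ᶜ = 0 := by
    rw [lebI, Measure.restrict_apply (measurableSet_Icc.compl)]
    simp
  rw [Measure.restrict_eq_zero.mpr this]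
  simp

lemma integrable_pA {N : ℕ} {pA : ℕ → ℝ → ℝ}
    (hpAmeas : ∀ y, Measurable (pA y)) (hpAnonneg : ∀ y γ, 0 ≤ pA y γ)
    (hpAsum : ∀ γ ∈ Set.Icc (0:ℝ) 1, ∑ y ∈ Finset.range (N + 1), pA y γ = 1)
    {y : ℕ} (hy : y ∈ Finset.range (N + 1))
    (P : Measure ℝ) [IsFiniteMeasure P] (hP : P (Set.Icc (0:ℝ) 1)ᶜ = 0) :
    Integrable (pA y) P := by
  refine (integrable_const (1:ℝ)).mono' (hpAmeas y).aestronglyMeasurable ?_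
  have hae : ∀ᵐ γ ∂P, γ ∈ Set.Icc (0:ℝ) 1 := by
    rw [ae_iff]
    exact hP
  filter_upwards [hae] with γ hγ
  rw [Real.norm_of_nonneg (hpAnonneg y γ)]
  calc pA y γ ≤ ∑ y' ∈ Finset.range (N + 1), pA y' γ :=
        Finset.single_le_sum (fun i _ => hpAnonneg i γ) hy
    _ = 1 := hpAsum γ hγ

lemma margin_densM {pA : ℕ → ℝ → ℝ} {q : ℝ → ℝ} (hq : IsDensity q) (y : ℕ) :
    margin pA (densM q) y = ∫ γ, pA y γ * q γ ∂lebI := by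
  have : densM q = lebI.withDensity fun γ => ((q γ).toNNReal : ℝ≥0∞) := rfl
  rw [margin, this, integral_withDensity_eq_integral_smul (hq.1.real_toNNReal) (pA y)]
  refine integral_congr_ae (Filter.Eventually.of_forall fun γ => ?_)
  simp only [NNReal.smul_def, smul_eq_mul, Real.coe_toNNReal _ (hq.2.1 γ), mul_comm]

/-- The key KL computation. -/
lemma KL_calc {q : ℝ → ℝ} (hq : IsDensity q) (hqpos : ∀ᵐ γ ∂lebI, 0 < q γ)
    (hqlog : Integrable (fun γ => Real.log (q γ)) lebI)
    {a : ℝ} (ha : 0 < a) (ν : Measure ℝ) [IsFiniteMeasure ν] (hν : ν ⟂ₘ lebI) :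
    KLdiv lebI (lebI.withDensity (fun γ => ENNReal.ofReal (a * q γ)) + ν)
      = ((- Real.log a - ∫ γ, Real.log (q γ) ∂lebI : ℝ) : EReal) := by
  set W : Measure ℝ := lebI.withDensity (fun γ => ENNReal.ofReal (a * q γ)) with hW
  have hmeas : Measurable fun γ => ENNReal.ofReal (a * q γ) :=
    (hq.1.const_mul a).ennreal_ofReal
  have hWfin : IsFiniteMeasure W := by
    refine isFiniteMeasure_withDensity ?_
    have : ∫⁻ γ, ENNReal.ofReal (a * q γ) ∂lebI
        = ENNReal.ofReal a * ∫⁻ γ, ENNReal.ofReal (q γ) ∂lebI := by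
      rw [← lintegral_const_mul _ (hq.1.ennreal_ofReal)]
      refine lintegral_congr fun γ => ?_
      rw [ENNReal.ofReal_mul ha.le]
    rw [this, isDensity_lintegral hq, mul_one]
    exact ENNReal.ofReal_ne_top
  have hac : lebI ≪ W + ν := by
    refine Measure.AbsolutelyContinuous.trans ?_
      (Measure.absolutelyContinuous_of_le (Measure.le_add_right le_rfl))
    refine withDensity_absolutelyContinuous' hmeas.aemeasurable ?_
    filter_upwards [hqpos] with γ hγ
    simp [ENNReal.ofReal_eq_zero, not_le, mul_pos ha hγ]
  have hrn : lebI.rnDeriv (W + ν) =ᵐ[lebI] fun x => (ENNReal.ofReal (a * q x))⁻¹ := by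
    have h1 : ((W + ν).rnDeriv lebI)⁻¹ =ᵐ[lebI] lebI.rnDeriv (W + ν) :=
      Measure.inv_rnDeriv' hac
    have h2 : (W + ν).rnDeriv lebI =ᵐ[lebI] W.rnDeriv lebI + ν.rnDeriv lebI :=
      Measure.rnDeriv_add W ν lebI
    have h3 : W.rnDeriv lebI =ᵐ[lebI] fun γ => ENNReal.ofReal (a * q γ) :=
      Measure.rnDeriv_withDensity lebI hmeas
    have h4 : ν.rnDeriv lebI =ᵐ[lebI] 0 := hν.rnDeriv_ae_eq_zero
    filter_upwards [h1, h2, h3, h4] with x h1 h2 h3 h4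
    rw [← h1, Pi.inv_apply, h2, Pi.add_apply, h3, h4, Pi.zero_apply, add_zero]
  have hlogeq : (fun x => Real.log ((lebI.rnDeriv (W + ν) x).toReal))
      =ᵐ[lebI] fun x => -(Real.log a + Real.log (q x)) := by
    filter_upwards [hrn, hqpos] with x hx hq0
    rw [hx, ENNReal.toReal_inv, ENNReal.toReal_ofReal (by positivity),
      Real.log_inv, Real.log_mul ha.ne' hq0.ne']
  have hint : Integrable (fun x => Real.log ((lebI.rnDeriv (W + ν) x).toReal)) lebI :=
    (Integrable.neg ((integrable_const _).add hqlog)).congr hlogeq.symm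
  rw [KLdiv, if_pos ⟨hac, hint⟩]
  congr 1
  rw [integral_congr_ae hlogeq, integral_neg, integral_add (integrable_const _) hqlog,
    integral_const]
  simp only [neg_add, sub_eq_add_neg, smul_eq_mul]
  ring_nf
  simp [mul_comm]

/-- The purely analytic part: the difference quotient tends to the derivative. -/
lemma aux_deriv (N : ℕ) (phat m s : ℕ → ℝ) (μ C : ℝ)
    (hphat : ∀ y, 0 ≤ phat y) (hphat1 : ∑ y ∈ Finset.range (N + 1), phat y = 1)
    (hsnn : ∀ y, 0 ≤ s y)
    (hm : ∀ y ∈ Finset.range (N + 1), 0 < phat y → 0 < m y) :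
    Tendsto (fun lam : ℝ =>
        (((∑ y ∈ Finset.range (N + 1), phat y * Real.log ((1 - lam) * m y + lam * s y))
            + μ * Real.log (1 - lam) + μ * C)
          - ((∑ y ∈ Finset.range (N + 1), phat y * Real.log (m y)) + μ * C)) / lam)
      (𝓝[>] 0)
      (𝓝 (∑ y ∈ Finset.range (N + 1), phat y * s y / m y - 1 - μ)) := by
  set g : ℝ → ℝ := fun lam =>
    (∑ y ∈ Finset.range (N + 1), phat y * Real.log ((1 - lam) * m y + lam * s y))
      + μ * Real.log (1 - lam) with hgdef
  have hg : HasDerivAt g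
      (∑ y ∈ Finset.range (N + 1), phat y * s y / m y - 1 - μ) 0 := by
    have h1 : ∀ y ∈ Finset.range (N + 1),
        HasDerivAt (fun lam : ℝ => phat y * Real.log ((1 - lam) * m y + lam * s y))
          (phat y * s y / m y - phat y) 0 := by
      intro y hy
      by_cases hp : phat y = 0
      · simpa [hp] using hasDerivAt_const (0:ℝ) (0:ℝ)
      · have hpy : 0 < phat y := lt_of_le_of_ne (hphat y) (Ne.symm hp)
        have hmy : 0 < m y := hm y hy hpy
        have hin : HasDerivAt (fun lam : ℝ => (1 - lam) * m y + lam * s y) (s y - m y) 0 := by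
          have heq : (fun lam : ℝ => (1 - lam) * m y + lam * s y)
              = fun lam => m y + lam * (s y - m y) := by funext lam; ring
          rw [heq]
          simpa using ((hasDerivAt_id (0:ℝ)).mul_const (s y - m y)).const_add (m y)
        have hne : (1 - (0:ℝ)) * m y + 0 * s y ≠ 0 := by simpa using hmy.ne'
        have hlog := (hin.log hne).const_mul (phat y)
        refine hlog.congr_deriv ?_
        have h' := hmy.ne'
        simp only [sub_zero, one_mul, zero_mul, add_zero]
        rw [sub_div, div_self h']
        ring
    have h2 : HasDerivAt (fun lam : ℝ => μ * Real.log (1 - lam)) (-μ) 0 := by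
      have hin : HasDerivAt (fun lam : ℝ => 1 - lam) (-1) 0 := by
        simpa using (hasDerivAt_id (0:ℝ)).const_sub 1
      have := (hin.log (by norm_num)).const_mul μ
      refine this.congr_deriv ?_
      norm_num
    have := (HasDerivAt.fun_sum h1).add h2
    rw [hgdef]
    refine this.congr_deriv ?_
    rw [Finset.sum_sub_distrib, hphat1]
    ring
  have hslope := hasDerivAt_iff_tendsto_slope.mp hg
  have hmono : 𝓝[>] (0:ℝ) ≤ 𝓝[≠] (0:ℝ) :=
    nhdsWithin_mono 0 fun x hx => ne_of_gt hx
  refine Filter.Tendsto.congr' ?_ (hslope.mono_left hmono)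
  filter_upwards [self_mem_nhdsWithin] with lam (hlam : lam ∈ Set.Ioi (0:ℝ))
  have hg0 : g 0 = ∑ y ∈ Finset.range (N + 1), phat y * Real.log (m y) := by
    rw [hgdef]; simp
  rw [slope_def_field, hg0, hgdef]
  simp only [sub_zero]
  ring

/-- **Lemma (Gâteaux derivative of `ℓ_μ` in a singular direction).**
Fix `μ > 0`.  Let `Q` be a probability measure on `[0,1]` with Lebesgue density `q`
such that `∫₀¹ log q > −∞` and `p_A(y;Q) > 0` whenever `p̂(y) > 0`.  Let `Q_s` be a
probability measure on `[0,1]` singular w.r.t. Lebesgue measure, and let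
`G = Q_s − Q`.  Then the one-sided directional derivative of `ℓ_μ` at `Q` in direction
`G` exists and equals `∑_y p̂(y) p_A(y;Q_s)/p_A(y;Q) − 1 − μ`. -/
theorem gateaux_derivative_singular_direction
    (N : ℕ) (pA : ℕ → ℝ → ℝ) (phat : ℕ → ℝ)
    (hpAmeas : ∀ y, Measurable (pA y)) (hpAnonneg : ∀ y γ, 0 ≤ pA y γ)
    (hpAsum : ∀ γ ∈ Set.Icc (0:ℝ) 1, ∑ y ∈ Finset.range (N + 1), pA y γ = 1)
    (hphat : ∀ y, 0 ≤ phat y) (hphat1 : ∑ y ∈ Finset.range (N + 1), phat y = 1)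
    (μ : ℝ) (hμ : 0 < μ)
    (q : ℝ → ℝ) (hq : IsDensity q)
    (hqpos : ∀ᵐ γ ∂lebI, 0 < q γ)
    (hqlog : Integrable (fun γ => Real.log (q γ)) lebI)
    (hmarg : ∀ y ∈ Finset.range (N + 1), 0 < phat y → 0 < ∫ γ, pA y γ * q γ ∂lebI)
    (Qs : Measure ℝ) (hQsprob : IsProbabilityMeasure Qs)
    (hQsI : Qs (Set.Icc (0:ℝ) 1)ᶜ = 0)
    (hQssing : Measure.MutuallySingular Qs volume) :
    Tendsto
      (fun lam : ℝ =>
        ((regLoglik N pA phat μ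
              (ENNReal.ofReal (1 - lam) • densM q + ENNReal.ofReal lam • Qs)).toReal
          - (regLoglik N pA phat μ (densM q)).toReal) / lam)
      (𝓝[>] 0)
      (𝓝 (∑ y ∈ Finset.range (N + 1),
            phat y * (∫ γ, pA y γ ∂Qs) / (∫ γ, pA y γ * q γ ∂lebI) - 1 - μ)) := by
  haveI := hQsprob
  haveI := densM_prob hq
  set m : ℕ → ℝ := fun y => ∫ γ, pA y γ * q γ ∂lebI with hm
  set s : ℕ → ℝ := fun y => ∫ γ, pA y γ ∂Qs with hs
  set C : ℝ := ∫ γ, Real.log (q γ) ∂lebI with hC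
  have hm' : ∀ y ∈ Finset.range (N + 1), 0 < phat y → 0 < m y := hmarg
  have hsnn : ∀ y, 0 ≤ s y := fun y => integral_nonneg fun γ => hpAnonneg y γ
  -- marginals of the mixture
  have hmargin : ∀ lam : ℝ, lam ∈ Set.Ioo (0:ℝ) 1 → ∀ y ∈ Finset.range (N + 1),
      margin pA (ENNReal.ofReal (1 - lam) • densM q + ENNReal.ofReal lam • Qs) y
        = (1 - lam) * m y + lam * s y := by
    intro lam hlam y hy
    have h1 : Integrable (pA y) (ENNReal.ofReal (1 - lam) • densM q) :=
      (integrable_pA hpAmeas hpAnonneg hpAsum hy (densM q) densM_compl).smul_measure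
        ENNReal.ofReal_ne_top
    have h2 : Integrable (pA y) (ENNReal.ofReal lam • Qs) :=
      (integrable_pA hpAmeas hpAnonneg hpAsum hy Qs hQsI).smul_measure ENNReal.ofReal_ne_top
    have hmd : (∫ γ, pA y γ ∂(densM q)) = m y := margin_densM hq y
    rw [margin, integral_add_measure h1 h2, integral_smul_measure, integral_smul_measure,
      ENNReal.toReal_ofReal (by linarith [hlam.2] : (0:ℝ) ≤ 1 - lam),
      ENNReal.toReal_ofReal hlam.1.le, smul_eq_mul, smul_eq_mul, hmd, hs]
  -- value of the regularized log-likelihood at `densM q`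
  have hreg0 : regLoglik N pA phat μ (densM q)
      = (((∑ y ∈ Finset.range (N + 1), phat y * Real.log (m y)) + μ * C : ℝ) : EReal) := by
    have hKL : KLdiv lebI (densM q) = ((-C : ℝ) : EReal) := by
      have h0 : densM q
          = lebI.withDensity (fun γ => ENNReal.ofReal ((1:ℝ) * q γ)) + 0 := by
        simp [densM]
      rw [h0, KL_calc hq hqpos hqlog one_pos 0 Measure.MutuallySingular.zero_left]
      norm_num
      exact hC.symm
    have hll : loglik N pA phat (densM q)
        = ((∑ y ∈ Finset.range (N + 1), phat y * Real.log (m y) : ℝ) : EReal) := by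
      rw [loglik, if_pos]
      · congr 1
        refine Finset.sum_congr rfl fun y hy => ?_
        rw [margin_densM hq]
      · intro y hy hp
        rw [margin_densM hq]
        exact hmarg y hy hp
    rw [regLoglik, hll, hKL, ← EReal.coe_mul, ← EReal.coe_sub, EReal.coe_eq_coe_iff]
    ring
  -- value of the regularized log-likelihood along the path
  have hreg : ∀ lam : ℝ, lam ∈ Set.Ioo (0:ℝ) 1 →
      regLoglik N pA phat μ (ENNReal.ofReal (1 - lam) • densM q + ENNReal.ofReal lam • Qs)
        = (((∑ y ∈ Finset.range (N + 1), phat y * Real.log ((1 - lam) * m y + lam * s y))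
            + μ * Real.log (1 - lam) + μ * C : ℝ) : EReal) := by
    intro lam hlam
    haveI : IsFiniteMeasure (ENNReal.ofReal lam • Qs) := by
      constructor
      rw [Measure.smul_apply, smul_eq_mul]
      exact ENNReal.mul_lt_top ENNReal.ofReal_lt_top (measure_lt_top _ _)
    have hKL : KLdiv lebI (ENNReal.ofReal (1 - lam) • densM q + ENNReal.ofReal lam • Qs)
        = ((-(Real.log (1 - lam)) - C : ℝ) : EReal) := by
      have hPrep : (ENNReal.ofReal (1 - lam) • densM q + ENNReal.ofReal lam • Qs : Measure ℝ)
          = lebI.withDensity (fun γ => ENNReal.ofReal ((1 - lam) * q γ))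
              + ENNReal.ofReal lam • Qs := by
        congr 1
        rw [densM, ← withDensity_smul _ hq.1.ennreal_ofReal]
        congr 1
        funext γ
        rw [Pi.smul_apply, smul_eq_mul, ← ENNReal.ofReal_mul (by linarith [hlam.2])]
      have hsing : (ENNReal.ofReal lam • Qs) ⟂ₘ lebI :=
        hQssing.mono_ac
          (Measure.AbsolutelyContinuous.smul_left (Measure.AbsolutelyContinuous.refl Qs) _)
          (Measure.absolutelyContinuous_of_le Measure.restrict_le_self)
      rw [hPrep]
      exact KL_calc hq hqpos hqlog (by linarith [hlam.2]) _ hsing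
    have hll : loglik N pA phat (ENNReal.ofReal (1 - lam) • densM q + ENNReal.ofReal lam • Qs)
        = ((∑ y ∈ Finset.range (N + 1),
            phat y * Real.log ((1 - lam) * m y + lam * s y) : ℝ) : EReal) := by
      rw [loglik, if_pos]
      · congr 1
        refine Finset.sum_congr rfl fun y hy => ?_
        rw [hmargin lam hlam y hy]
      · intro y hy hp
        rw [hmargin lam hlam y hy]
        have hmy : 0 < m y := hm' y hy hp
        have hsy : 0 ≤ s y := hsnn y
        nlinarith [hlam.1, hlam.2]
    rw [regLoglik, hll, hKL, ← EReal.coe_mul, ← EReal.coe_sub, EReal.coe_eq_coe_iff]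
    ring
  -- conclude via the analytic lemma
  refine Filter.Tendsto.congr' ?_ (aux_deriv N phat m s μ C hphat hphat1 hsnn hm')
  filter_upwards [Ioo_mem_nhdsGT_of_mem (by norm_num : (0:ℝ) ∈ Set.Ico (0:ℝ) 1)]
    with lam hlam
  rw [hreg lam hlam, hreg0, EReal.toReal_coe, EReal.toReal_coe]
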